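/- Let T be a tree on [m] with depth-first walk X and height process H (in oDFS order), and let Q ⊂ ℤ⁺×ℤ⁺ be a finite pointset such that Q ∩ X = Q ∩ (H/2), where for a function f, S ∩ f := {(x,y) ∈ S : 0 < y ≤ f(x)}. Let k = |Q ∩ X| and let G^X and G^H be the graphs obtained from T by adding the surplus edges encoded by Q via the depth-first-walk correspondence and via the height-process correspondence respectively. Then the Gromov–Hausdorff distance between the metric spaces G^X and G^H (with graph distances) is at most k(||X - H/2|| + 2), where ||·|| is the supremum norm. -/

import Mathlib

open scoped Classical
noncomputable section

namespace RandomGraphs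

variable {n : ℕ}

/-- One step of ordered depth-first search (oDFS): the state is the pair
(stack of open vertices, set of explored vertices). The first vertex of the
stack is explored: it is removed and its unseen neighbors are prepended to the
stack in increasing order. -/
def dfsStep (G : SimpleGraph (Fin n)) :
    List (Fin n) × Finset (Fin n) → List (Fin n) × Finset (Fin n) :=
  fun st =>
    match st with
    | ([], A) => ([], A)
    | (v :: rest, A) =>
        (((G.neighborFinset v).filter
            (fun w => w ∉ A ∧ w ∉ (v :: rest))).sort (· ≤ ·) ++ rest,
          insert v A)

/-- The oDFS state at time `i`, started from the stack containing only vertex `0`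
(the vertex with smallest label). -/
def dfsState (G : SimpleGraph (Fin n)) (i : ℕ) :
    List (Fin n) × Finset (Fin n) :=
  (dfsStep G)^[i] ((List.finRange n).take 1, ∅)

/-- The stack `O_i` of open vertices at time `i`. -/
def stackAt (G : SimpleGraph (Fin n)) (i : ℕ) : List (Fin n) :=
  (dfsState G i).1

/-- The depth-first walk `X(i) = |O_i| - 1` of a connected graph. -/
def dfw (G : SimpleGraph (Fin n)) (i : ℕ) : ℕ :=
  (stackAt G i).length - 1

/-- The area `a(T) = Σ_{i=1}^{n-1} X(i)` of a tree. -/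
def area (G : SimpleGraph (Fin n)) : ℕ :=
  ∑ i ∈ Finset.Ico 1 n, dfw G i

/-- The set of (unordered) edges permitted by oDFS run on `T`: non-edges `uv`
of `T` such that both `u` and `v` lie in the stack `O_i` for some `i < n`. -/
def permittedSet (T : SimpleGraph (Fin n)) : Set (Sym2 (Fin n)) :=
  {e | ∃ u v : Fin n, e = s(u, v) ∧ u ≠ v ∧ ¬ T.Adj u v ∧
    ∃ i < n, u ∈ stackAt T i ∧ v ∈ stackAt T i}

/-- The set of neighbors of the currently explored vertex which have not been
seen before (these become new open vertices, and the corresponding edges are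
the tree edges discovered at time `i`). -/
def newNbrs (G : SimpleGraph (Fin n)) (i : ℕ) : Finset (Fin n) :=
  match dfsState G i with
  | ([], _) => ∅
  | (v :: rest, A) => (G.neighborFinset v).filter (fun w => w ∉ A ∧ w ∉ (v :: rest))

/-- The depth-first tree `T(G)` of a connected graph `G`: its edges join
the vertex explored at step `i` to each of its previously-unseen neighbors. -/
def dfTree (G : SimpleGraph (Fin n)) : SimpleGraph (Fin n) :=
  SimpleGraph.fromRel (fun u v =>
    ∃ i < n, (stackAt G i).head? = some u ∧ v ∈ newNbrs G i)


/-- The root of the DFS, i.e. the vertex with smallest label (when `n ≥ 1`). -/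
def rootOf : Option (Fin n) := (List.finRange n).head?

/-- The height process `H(i)` (in oDFS order): the graph distance from the
root to the vertex `v_i` explored at step `i`. -/
def hproc (G : SimpleGraph (Fin n)) (i : ℕ) : ℕ :=
  match (rootOf : Option (Fin n)), (stackAt G i).head? with
  | some r, some v => G.dist r v
  | _, _ => 0

/-- `Q ∩ X`: the points `(i,j)` of `Q` with `0 < j ≤ X(i)`. -/
def capX (T : SimpleGraph (Fin n)) (Q : Finset (ℕ × ℕ)) : Finset (ℕ × ℕ) :=
  Q.filter (fun q => 0 < q.2 ∧ q.2 ≤ dfw T q.1)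

/-- `Q ∩ (H/2)`: the points `(i,j)` of `Q` with `0 < 2j ≤ H(i)`. -/
def capH (T : SimpleGraph (Fin n)) (Q : Finset (ℕ × ℕ)) : Finset (ℕ × ℕ) :=
  Q.filter (fun q => 0 < q.2 ∧ 2 * q.2 ≤ hproc T q.1)

/-- The graph `G^X(T, Q)`: to the tree `T` we add, for each point
`(i,j) ∈ Q ∩ X`, an edge between the vertex `v_i` explored at step `i` and
the `j`-th vertex of the stack `O_i` counting from the bottom. -/
def GX (T : SimpleGraph (Fin n)) (Q : Finset (ℕ × ℕ)) : SimpleGraph (Fin n) :=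
  T ⊔ SimpleGraph.fromRel (fun u v =>
    ∃ q ∈ Q, 0 < q.2 ∧ q.2 ≤ dfw T q.1 ∧
      (stackAt T q.1).head? = some u ∧
      ((stackAt T q.1).reverse)[q.2 - 1]? = some v)

/-- The graph `G^H(T, Q)`: to the tree `T` we add, for each point
`(i,j) ∈ Q ∩ (H/2)`, an edge between the vertex `v_i` explored at step `i`
and the vertex at distance `2j - 1` from the root on the unique path from the
root to `v_i`. -/
def GH (T : SimpleGraph (Fin n)) (Q : Finset (ℕ × ℕ)) : SimpleGraph (Fin n) :=
  T ⊔ SimpleGraph.fromRel (fun u v =>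
    ∃ q ∈ Q, 0 < q.2 ∧ 2 * q.2 ≤ hproc T q.1 ∧
      (stackAt T q.1).head? = some u ∧
      ∃ r, (rootOf : Option (Fin n)) = some r ∧
        T.dist r v = 2 * q.2 - 1 ∧
        ∀ P : T.Walk r u, P.IsPath → v ∈ P.support)

/-- The metric space on the vertex set of a connected graph, with the graph
distance. -/
def graphMetric (G : SimpleGraph (Fin n)) (hG : G.Connected) :
    MetricSpace (Fin n) where
  dist u v := G.dist u v
  dist_self u := by simp
  dist_comm u v := by
    show ((G.dist u v : ℕ) : ℝ) = ((G.dist v u : ℕ) : ℝ)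
    exact_mod_cast G.dist_comm
  dist_triangle u v w := by
    show ((G.dist u w : ℕ) : ℝ) ≤ ((G.dist u v : ℕ) : ℝ) + ((G.dist v w : ℕ) : ℝ)
    exact_mod_cast hG.dist_triangle
  eq_of_dist_eq_zero {u v} h := by
    have h' : ((G.dist u v : ℕ) : ℝ) = 0 := h
    exact (hG.dist_eq_zero_iff).mp (by exact_mod_cast h')

/-- A connected graph on `Fin n` (`n ≥ 1`), viewed as a point of
Gromov–Hausdorff space. -/
def ghSpaceOfGraph [NeZero n] (G : SimpleGraph (Fin n)) (hG : G.Connected) :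
    GromovHausdorff.GHSpace :=
  letI := graphMetric G hG
  letI : Nonempty (Fin n) := ⟨0⟩
  GromovHausdorff.toGHSpace (Fin n)

/-- The supremum norm `‖X - H/2‖` of the difference between the depth-first
walk and half the height process. -/
def normXH (T : SimpleGraph (Fin n)) : ℝ :=
  ⨆ i : Fin n, |(dfw T (i : ℕ) : ℝ) - (hproc T (i : ℕ) : ℝ) / 2|

end RandomGraphs

namespace RandomGraphs

set_option linter.unusedSectionVars false

section Aux

open SimpleGraph

variable {m : ℕ} [NeZero m]

lemma rootOf_eq : (rootOf : Option (Fin m)) = some 0 := by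
  obtain ⟨k, rfl⟩ := Nat.exists_eq_succ_of_ne_zero (NeZero.ne m)
  simp [rootOf, List.finRange_succ]

lemma dfsState_zero (T : SimpleGraph (Fin m)) :
    dfsState T 0 = ([(0 : Fin m)], ∅) := by
  obtain ⟨k, rfl⟩ := Nat.exists_eq_succ_of_ne_zero (NeZero.ne m)
  simp [dfsState, List.finRange_succ]

lemma dfsState_succ (T : SimpleGraph (Fin m)) (i : ℕ) :
    dfsState T (i + 1) = dfsStep T (dfsState T i) := by
  simp [dfsState, Function.iterate_succ_apply']

lemma hproc_eq (T : SimpleGraph (Fin m)) {i : ℕ} {u : Fin m}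
    (h : (stackAt T i).head? = some u) : hproc T i = T.dist 0 u := by
  rw [hproc, rootOf_eq, h]

/-- In a tree, any path has length equal to the distance between its endpoints. -/
lemma tree_path_length {T : SimpleGraph (Fin m)} (hT : T.IsTree) {a b : Fin m}
    (p : T.Walk a b) (hp : p.IsPath) : p.length = T.dist a b := by
  obtain ⟨q, hq⟩ := (hT.isConnected).exists_walk_length_eq_dist a b
  have hqp : q.IsPath := q.isPath_of_length_eq_dist hq
  obtain ⟨P, -, huniq⟩ := hT.existsUnique_path a b
  rw [huniq p hp, ← huniq q hqp, hq]

/-- In a tree, a neighbor of `v` is either a child (distance from `r` one more)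
or the unique parent. -/
lemma tree_adj_dist {T : SimpleGraph (Fin m)} (hT : T.IsTree) {r v w : Fin m}
    (hadj : T.Adj v w) :
    T.dist r w = T.dist r v + 1 ∨
      (T.dist r w + 1 = T.dist r v ∧
        ∀ w', T.Adj v w' → T.dist r w' + 1 = T.dist r v → w' = w) := by
  classical
  obtain ⟨P, hPlen⟩ := (hT.isConnected).exists_walk_length_eq_dist r w
  have hPpath : P.IsPath := P.isPath_of_length_eq_dist hPlen
  by_cases hv : v ∈ P.support
  · left
    have h1 : (P.takeUntil v hv).length = T.dist r v :=
      tree_path_length hT _ (hPpath.takeUntil hv)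
    have h2 : (P.dropUntil v hv).length = T.dist v w :=
      tree_path_length hT _ (hPpath.dropUntil hv)
    have h3 : T.dist v w = 1 := SimpleGraph.dist_eq_one_iff_adj.mpr hadj
    have h4 := congrArg SimpleGraph.Walk.length (P.take_spec hv)
    rw [SimpleGraph.Walk.length_append, h1, h2, h3, hPlen] at h4
    omega
  · right
    have hQpath : ((SimpleGraph.Walk.cons hadj P.reverse).reverse).IsPath := by
      rw [SimpleGraph.Walk.isPath_reverse_iff, SimpleGraph.Walk.cons_isPath_iff]
      exact ⟨(SimpleGraph.Walk.isPath_reverse_iff P).mpr hPpath, by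
        rwa [SimpleGraph.Walk.support_reverse, List.mem_reverse]⟩
    have hQlen : ((SimpleGraph.Walk.cons hadj P.reverse).reverse).length = T.dist r v :=
      tree_path_length hT _ hQpath
    rw [SimpleGraph.Walk.length_reverse, SimpleGraph.Walk.length_cons,
      SimpleGraph.Walk.length_reverse, hPlen] at hQlen
    refine ⟨hQlen, ?_⟩
    intro w' hadj' hdist'
    obtain ⟨P', hPlen'⟩ := (hT.isConnected).exists_walk_length_eq_dist r w'
    have hPpath' : P'.IsPath := P'.isPath_of_length_eq_dist hPlen'
    have hv' : v ∉ P'.support := by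
      intro hv'
      have hle : T.dist r v ≤ (P'.takeUntil v hv').length := SimpleGraph.dist_le _
      have hle2 := P'.length_takeUntil_le hv'
      omega
    have hQpath' : ((SimpleGraph.Walk.cons hadj' P'.reverse).reverse).IsPath := by
      rw [SimpleGraph.Walk.isPath_reverse_iff, SimpleGraph.Walk.cons_isPath_iff]
      exact ⟨(SimpleGraph.Walk.isPath_reverse_iff P').mpr hPpath', by
        rwa [SimpleGraph.Walk.support_reverse, List.mem_reverse]⟩
    obtain ⟨Pu, -, huniq⟩ := hT.existsUnique_path r v
    have hQQ' : (SimpleGraph.Walk.cons hadj P.reverse).reverse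
        = (SimpleGraph.Walk.cons hadj' P'.reverse).reverse :=
      (huniq _ hQpath).trans (huniq _ hQpath').symm
    have hsup := congrArg SimpleGraph.Walk.support hQQ'
    rw [SimpleGraph.Walk.support_reverse, SimpleGraph.Walk.support_reverse,
      List.reverse_inj, SimpleGraph.Walk.support_cons, SimpleGraph.Walk.support_cons,
      List.cons_inj_right] at hsup
    have h1 := P.reverse.support_eq_cons
    have h2 := P'.reverse.support_eq_cons
    rw [h1, h2] at hsup
    exact (List.cons_eq_cons.mp hsup).1.symm

end Aux

end RandomGraphs

namespace RandomGraphs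

set_option linter.unusedSectionVars false

section Aux2

open SimpleGraph

variable {m : ℕ} [NeZero m]

/-- The walk along a function `pa` with consecutive adjacencies. -/
def mkW (T : SimpleGraph (Fin m)) (pa : ℕ → Fin m) :
    (k : ℕ) → (∀ d < k, T.Adj (pa d) (pa (d+1))) → T.Walk (pa 0) (pa k)
  | 0, _ => SimpleGraph.Walk.nil
  | (k+1), h => (mkW T pa k (fun d hd => h d (by omega))).concat (h k (by omega))

lemma mkW_length (T : SimpleGraph (Fin m)) (pa : ℕ → Fin m) (k : ℕ)
    (h : ∀ d < k, T.Adj (pa d) (pa (d+1))) : (mkW T pa k h).length = k := by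
  induction k with
  | zero => rfl
  | succ k ih => rw [mkW, SimpleGraph.Walk.length_concat, ih]

lemma mkW_support (T : SimpleGraph (Fin m)) (pa : ℕ → Fin m) (k : ℕ)
    (h : ∀ d < k, T.Adj (pa d) (pa (d+1))) :
    (mkW T pa k h).support = (List.range (k+1)).map pa := by
  induction k with
  | zero => rfl
  | succ k ih =>
      rw [mkW, SimpleGraph.Walk.support_concat, ih, List.range_succ (n := k + 1)]
      simp

lemma mkW_mem_support (T : SimpleGraph (Fin m)) (pa : ℕ → Fin m) (k : ℕ)
    (h : ∀ d < k, T.Adj (pa d) (pa (d+1))) (x : Fin m) :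
    x ∈ (mkW T pa k h).support ↔ ∃ d ≤ k, pa d = x := by
  rw [mkW_support]
  simp only [List.mem_map, List.mem_range]
  constructor
  · rintro ⟨d, hd, rfl⟩; exact ⟨d, by omega, rfl⟩
  · rintro ⟨d, hd, rfl⟩; exact ⟨d, by omega, rfl⟩

lemma mkW_isPath (T : SimpleGraph (Fin m)) (pa : ℕ → Fin m) (k : ℕ)
    (h : ∀ d < k, T.Adj (pa d) (pa (d+1)))
    (hd : ∀ d ≤ k, T.dist 0 (pa d) = d) : (mkW T pa k h).IsPath := by
  rw [SimpleGraph.Walk.isPath_def, mkW_support]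
  refine List.Nodup.map_on ?_ (List.nodup_range)
  intro a ha b hb hab
  rw [List.mem_range] at ha hb
  have h1 := hd a (by omega)
  have h2 := hd b (by omega)
  rw [hab] at h1; omega

/-- Distances along the `pa` sequence. -/
lemma pa_dist_le {T : SimpleGraph (Fin m)} (hc : T.Connected) (pa : ℕ → Fin m) (k : ℕ)
    (h : ∀ d < k, T.Adj (pa d) (pa (d+1))) :
    ∀ a b, a ≤ b → b ≤ k → T.dist (pa a) (pa b) ≤ b - a := by
  have main : ∀ e a, a + e ≤ k → T.dist (pa a) (pa (a + e)) ≤ e := by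
    intro e
    induction e with
    | zero => intro a _; simp
    | succ e ih =>
        intro a ha
        have h1 : T.dist (pa (a+e)) (pa (a+e+1)) = 1 :=
          SimpleGraph.dist_eq_one_iff_adj.mpr (h (a+e) (by omega))
        calc T.dist (pa a) (pa (a + (e+1)))
            ≤ T.dist (pa a) (pa (a+e)) + T.dist (pa (a+e)) (pa (a+e+1)) := by
              exact hc.dist_triangle
          _ ≤ e + 1 := by
              have := ih a (by omega)
              omega
  intro a b hab hbk
  have := main (b - a) a (by omega)
  rw [Nat.add_sub_cancel' hab] at this
  omega

end Aux2

end RandomGraphs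

namespace RandomGraphs

set_option linter.unusedSectionVars false
set_option maxHeartbeats 1000000

section Aux3

open SimpleGraph

variable {m : ℕ} [NeZero m]

/-- Number of elements of the stack at depth at most `d`. -/
def cnt (T : SimpleGraph (Fin m)) (l : List (Fin m)) (d : ℕ) : ℕ :=
  (l.filter (fun w => T.dist 0 w ≤ d)).length

/-- The DFS invariant. -/
def Inv (T : SimpleGraph (Fin m)) (i : ℕ) : Prop :=
  ∀ v rest A, dfsState T i = (v :: rest, A) →
    (v :: rest).Nodup ∧
    (∀ w ∈ v :: rest, w ∉ A) ∧
    A.card = i ∧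
    (∀ a ∈ A, ∀ w, T.Adj a w → w ∈ A ∨ w ∈ v :: rest) ∧
    ∃ pa : ℕ → Fin m,
      pa 0 = 0 ∧
      pa (T.dist 0 v) = v ∧
      (∀ d < T.dist 0 v, T.Adj (pa d) (pa (d+1))) ∧
      (∀ d ≤ T.dist 0 v, T.dist 0 (pa d) = d) ∧
      (∀ d < T.dist 0 v, pa d ∈ A) ∧
      (∀ w ∈ rest, 0 < T.dist 0 w ∧ T.dist 0 w ≤ T.dist 0 v ∧
        T.Adj (pa (T.dist 0 w - 1)) w) ∧
      List.Pairwise (fun a b => T.dist 0 b ≤ T.dist 0 a) rest ∧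
      (∀ d ≤ T.dist 0 v, ∃ t ≤ i, (stackAt T t).head? = some (pa d) ∧
        (stackAt T t).length = 1 + cnt T rest d)

lemma inv_zero (T : SimpleGraph (Fin m)) : Inv T 0 := by
  intro v rest A hst
  rw [dfsState_zero] at hst
  obtain ⟨h1, h2⟩ := Prod.mk.injEq .. ▸ hst
  obtain ⟨rfl, rfl⟩ : v = 0 ∧ rest = [] := by
    constructor
    · exact ((List.cons_eq_cons.mp h1).1).symm
    · exact ((List.cons_eq_cons.mp h1).2).symm
  subst h2
  have hd0 : T.dist 0 (0 : Fin m) = 0 := SimpleGraph.dist_self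
  refine ⟨by simp, by simp, by simp, by simp, fun _ => 0, rfl, by rw [hd0], ?_, ?_, ?_, by simp, by simp, ?_⟩
  · intro d hd; omega
  · intro d hd; rw [hd0] at hd; interval_cases d; exact hd0
  · intro d hd; omega
  · intro d hd
    rw [hd0] at hd
    refine ⟨0, le_refl 0, ?_, ?_⟩
    · rw [stackAt, dfsState_zero]; rfl
    · rw [stackAt, dfsState_zero]; simp [cnt]

lemma inv_succ {T : SimpleGraph (Fin m)} (hT : T.IsTree) (i : ℕ) (hi : Inv T i) :
    Inv T (i + 1) := by
  classical
  intro v' rest' A' hstate1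
  have h' := hstate1
  rw [dfsState_succ] at h'
  rcases hstate : dfsState T i with ⟨stk, A⟩
  rw [hstate] at h'
  cases stk with
  | nil =>
      rw [dfsStep] at h'
      exact absurd (congrArg Prod.fst h') (by simp)
  | cons v rest =>
  obtain ⟨hnodup, hdisj, hcard, hclos, pa, hpa0, hpah, hpaadj, hpadist, hpaA, hR1, hpw, hcnt⟩ :=
    hi v rest A hstate
  rw [dfsStep] at h'
  set F : Finset (Fin m) :=
    (T.neighborFinset v).filter (fun w => w ∉ A ∧ w ∉ v :: rest) with hF
  set pushed : List (Fin m) := F.sort (· ≤ ·) with hpushdef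
  have hstk' : pushed ++ rest = v' :: rest' := congrArg Prod.fst h'
  have hA' : (insert v A : Finset (Fin m)) = A' := congrArg Prod.snd h'
  have hvA : v ∉ A := hdisj v (by simp)
  have hcardA' : A'.card = i + 1 := by
    rw [← hA', Finset.card_insert_of_notMem hvA, hcard]
  have hpushmem : ∀ w ∈ pushed, T.Adj v w ∧ w ∉ A ∧ w ∉ v :: rest := by
    intro w hw
    rw [hpushdef] at hw
    rw [Finset.mem_sort] at hw
    rw [hF, Finset.mem_filter, SimpleGraph.mem_neighborFinset] at hw
    exact ⟨hw.1, hw.2.1, hw.2.2⟩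
  set h : ℕ := T.dist 0 v with hh
  -- every pushed vertex is a child: depth h + 1
  have hchild : ∀ w ∈ pushed, T.dist 0 w = h + 1 := by
    intro w hw
    obtain ⟨hadj, hwA, hwstk⟩ := hpushmem w hw
    rcases tree_adj_dist hT (r := 0) hadj with hleft | ⟨hd, huniq⟩
    · exact hleft
    · exfalso
      have hh1 : 1 ≤ h := by omega
      have hadjpa : T.Adj (pa (h - 1)) v := by
        have := hpaadj (h - 1) (by omega)
        rwa [Nat.sub_add_cancel hh1, hpah] at this
      have : pa (h - 1) = w := huniq _ hadjpa.symm (by rw [hpadist (h-1) (by omega)]; omega)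
      exact hwA (this ▸ hpaA (h - 1) (by omega))
  have hstack1 : stackAt T (i + 1) = v' :: rest' := by
    rw [stackAt, hstate1]
  have hclosure_v : ∀ w, T.Adj v w → w ∈ A ∨ w ∈ v :: rest ∨ w ∈ pushed := by
    intro w hadj
    by_cases h1 : w ∈ A
    · exact Or.inl h1
    by_cases h2 : w ∈ v :: rest
    · exact Or.inr (Or.inl h2)
    refine Or.inr (Or.inr ?_)
    rw [hpushdef, Finset.mem_sort, hF, Finset.mem_filter, SimpleGraph.mem_neighborFinset]
    exact ⟨hadj, h1, h2⟩
  cases hp : pushed with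
  | nil =>
      -- no new vertices: the new head v' comes from rest
      rw [hp, List.nil_append] at hstk'
      subst hstk'
      have hrestnodup : (v' :: rest').Nodup := (List.nodup_cons.mp hnodup).2
      have hv'rest : v' ∈ v' :: rest' := by simp
      obtain ⟨hd1, hd2, hadjv'⟩ := hR1 v' hv'rest
      set dstar : ℕ := T.dist 0 v' with hdstar
      refine ⟨hrestnodup, ?_, hcardA', ?_, fun d => if d = dstar then v' else pa d, ?_, ?_, ?_, ?_, ?_, ?_, ?_, ?_⟩
      · -- disj
        intro w hw
        rw [← hA', Finset.mem_insert]
        push_neg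
        constructor
        · rintro rfl; exact (List.nodup_cons.mp hnodup).1 hw
        · exact hdisj w (List.mem_cons_of_mem _ hw)
      · -- closure
        intro a ha w hadj
        rw [← hA', Finset.mem_insert] at ha
        have step : w ∈ A ∨ w ∈ v :: v' :: rest' → w ∈ A' ∨ w ∈ v' :: rest' := by
          rintro (h1 | h1)
          · exact Or.inl (by rw [← hA']; exact Finset.mem_insert_of_mem h1)
          · rcases List.mem_cons.mp h1 with rfl | h1
            · exact Or.inl (by rw [← hA']; exact Finset.mem_insert_self _ _)
            · exact Or.inr h1
        rcases ha with rfl | ha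
        · rcases hclosure_v w hadj with h1 | h1 | h1
          · exact step (Or.inl h1)
          · exact step (Or.inr h1)
          · rw [hp] at h1; simp at h1
        · exact step (hclos a ha w hadj)
      · -- pa' 0 = 0
        beta_reduce
        rw [if_neg (by omega)]; exact hpa0
      · -- pa' dstar = v'
        beta_reduce
        rw [if_pos rfl]
      · -- adjacency
        intro d hd
        beta_reduce
        rw [if_neg (by omega)]
        by_cases hd1 : d + 1 = dstar
        · rw [if_pos hd1]
          have : d = T.dist 0 v' - 1 := by omega
          rw [this]; exact hadjv'
        · rw [if_neg hd1]
          exact hpaadj d (by omega)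
      · -- dist
        intro d hd
        beta_reduce
        by_cases hd1 : d = dstar
        · rw [if_pos hd1, hd1]
        · rw [if_neg hd1]; exact hpadist d (by omega)
      · -- pa' d ∈ A'
        intro d hd
        beta_reduce
        rw [if_neg (by omega), ← hA']
        exact Finset.mem_insert_of_mem (hpaA d (by omega))
      · -- R1
        intro w hw
        have hwrest : w ∈ v' :: rest' := List.mem_cons_of_mem _ hw
        obtain ⟨e1, e2, e3⟩ := hR1 w hwrest
        have hle : T.dist 0 w ≤ dstar := (List.pairwise_cons.mp hpw).1 w hw
        refine ⟨e1, hle, ?_⟩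
        beta_reduce
        rw [if_neg (by omega)]
        exact e3
      · -- pairwise
        exact (List.pairwise_cons.mp hpw).2
      · -- counting
        intro d hd
        by_cases hd1 : d = dstar
        · refine ⟨i + 1, le_refl _, ?_, ?_⟩
          · beta_reduce
            rw [hstack1, List.head?_cons, hd1, if_pos rfl]
          · rw [hstack1]
            have : cnt T rest' d = rest'.length := by
              rw [cnt, List.filter_eq_self.mpr]
              intro w hw
              have := (List.pairwise_cons.mp hpw).1 w hw
              simp only [decide_eq_true_eq]
              omega
            rw [this]
            simp only [List.length_cons]
            omega
        · obtain ⟨t, ht, hthead, htlen⟩ := hcnt d (by omega)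
          refine ⟨t, by omega, ?_, ?_⟩
          · beta_reduce
            rw [if_neg hd1]; exact hthead
          · rw [htlen]
            congr 1
            rw [cnt, cnt, List.filter_cons_of_neg (by simpa using by omega)]
  | cons w ptail =>
      -- new vertices pushed, new head is w
      rw [hp] at hstk'
      have hv'w : v' = w := ((List.cons_eq_cons.mp hstk').1).symm
      have hrest' : rest' = ptail ++ rest := ((List.cons_eq_cons.mp hstk').2).symm
      subst hv'w
      have hwmem : v' ∈ pushed := by rw [hp]; simp
      have hdw : T.dist 0 v' = h + 1 := hchild v' hwmem
      have hpushnodup : pushed.Nodup := by rw [hpushdef]; exact Finset.sort_nodup _ _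
      have hmempush : ∀ x ∈ v' :: ptail, T.Adj v x ∧ x ∉ A ∧ x ∉ v :: rest := by
        intro x hx; exact hpushmem x (by rw [hp]; exact hx)
      have hdeppush : ∀ x ∈ v' :: ptail, T.dist 0 x = h + 1 := by
        intro x hx; exact hchild x (by rw [hp]; exact hx)
      refine ⟨?_, ?_, hcardA', ?_, fun d => if d = h + 1 then v' else pa d, ?_, ?_, ?_, ?_, ?_, ?_, ?_, ?_⟩
      · -- nodup
        rw [← hstk', ← hp]
        refine List.Nodup.append (hp ▸ hpushnodup) (List.nodup_cons.mp hnodup).2 ?_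
        intro x hx hx2
        exact (hpushmem x hx).2.2 (List.mem_cons_of_mem _ hx2)
      · -- disj
        intro x hx
        rw [← hA', Finset.mem_insert]
        push_neg
        rw [← hstk', ← hp] at hx
        rcases List.mem_append.mp hx with hx1 | hx1
        · obtain ⟨-, e2, e3⟩ := hpushmem x hx1
          exact ⟨fun hxv => e3 (hxv ▸ (List.mem_cons_self : v ∈ v :: rest)), e2⟩
        · constructor
          · rintro rfl; exact (List.nodup_cons.mp hnodup).1 hx1
          · exact hdisj x (List.mem_cons_of_mem _ hx1)
      · -- closure
        intro a ha x hadj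
        rw [← hA', Finset.mem_insert] at ha
        have step : x ∈ A ∨ x ∈ v :: rest ∨ x ∈ pushed → x ∈ A' ∨ x ∈ v' :: rest' := by
          rintro (h1 | h1 | h1)
          · exact Or.inl (by rw [← hA']; exact Finset.mem_insert_of_mem h1)
          · rcases List.mem_cons.mp h1 with rfl | h1
            · exact Or.inl (by rw [← hA']; exact Finset.mem_insert_self _ _)
            · refine Or.inr ?_
              rw [← hstk', ← hp]
              exact List.mem_append.mpr (Or.inr h1)
          · refine Or.inr ?_
            rw [← hstk', ← hp]
            exact List.mem_append.mpr (Or.inl h1)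
        rcases ha with rfl | ha
        · exact step (by rcases hclosure_v x hadj with h1 | h1 | h1 <;> tauto)
        · exact step (by rcases hclos a ha x hadj with h1 | h1 <;> tauto)
      · -- pa' 0
        beta_reduce
        rw [if_neg (by omega)]; exact hpa0
      · -- pa' (h+1) = w
        beta_reduce
        rw [hdw, if_pos rfl]
      · -- adjacency
        intro d hd
        beta_reduce
        rw [hdw] at hd
        rw [if_neg (by omega)]
        by_cases hd1 : d + 1 = h + 1
        · rw [if_pos hd1]
          have hdh : d = h := by omega
          subst hdh
          rw [hpah]
          exact (hmempush v' (by simp)).1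
        · rw [if_neg hd1]
          exact hpaadj d (by omega)
      · -- dist
        intro d hd
        beta_reduce
        rw [hdw] at hd
        by_cases hd1 : d = h + 1
        · rw [if_pos hd1, hd1, hdw]
        · rw [if_neg hd1]; exact hpadist d (by omega)
      · -- pa ∈ A'
        intro d hd
        beta_reduce
        rw [hdw] at hd
        rw [if_neg (by omega), ← hA']
        by_cases hd1 : d = h
        · subst hd1; rw [hpah]; exact Finset.mem_insert_self _ _
        · exact Finset.mem_insert_of_mem (hpaA d (by omega))
      · -- R1
        intro x hx
        rw [hrest'] at hx
        rw [hdw]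
        rcases List.mem_append.mp hx with hx1 | hx1
        · have hdx : T.dist 0 x = h + 1 := hdeppush x (List.mem_cons_of_mem _ hx1)
          refine ⟨by omega, by omega, ?_⟩
          beta_reduce
          rw [hdx]
          simp only [Nat.add_sub_cancel]
          rw [if_neg (by omega), hpah]
          exact (hmempush x (List.mem_cons_of_mem _ hx1)).1
        · obtain ⟨e1, e2, e3⟩ := hR1 x hx1
          refine ⟨e1, by omega, ?_⟩
          beta_reduce
          rw [if_neg (by omega)]
          exact e3
      · -- pairwise
        rw [hrest']
        rw [List.pairwise_append]
        refine ⟨?_, hpw, ?_⟩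
        · refine List.pairwise_of_forall_mem_list ?_
          intro a ha b hb
          rw [hdeppush a (List.mem_cons_of_mem _ ha), hdeppush b (List.mem_cons_of_mem _ hb)]
        · intro a ha b hb
          rw [hdeppush a (List.mem_cons_of_mem _ ha)]
          have := (hR1 b hb).2.1
          omega
      · -- counting
        intro d hd
        rw [hdw] at hd
        by_cases hd1 : d = h + 1
        · refine ⟨i + 1, le_refl _, ?_, ?_⟩
          · beta_reduce
            rw [hstack1, List.head?_cons, hd1, if_pos rfl]
          · rw [hstack1, hrest']
            have : cnt T (ptail ++ rest) d = (ptail ++ rest).length := by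
              rw [cnt, List.filter_eq_self.mpr]
              intro x hx
              rcases List.mem_append.mp hx with hx1 | hx1
              · have := hdeppush x (List.mem_cons_of_mem _ hx1)
                simp only [decide_eq_true_eq]
                omega
              · have := (hR1 x hx1).2.1
                simp only [decide_eq_true_eq]
                omega
            rw [this]
            simp only [List.length_cons]
            omega
        · obtain ⟨t, ht, hthead, htlen⟩ := hcnt d (by omega)
          refine ⟨t, by omega, ?_, ?_⟩
          · beta_reduce
            rw [if_neg hd1]; exact hthead
          · rw [htlen]
            congr 1
            rw [hrest', cnt, cnt, List.filter_append]
            have : List.filter (fun w => decide (T.dist 0 w ≤ d)) ptail = [] := by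
              rw [List.filter_eq_nil_iff]
              intro x hx
              have := hdeppush x (List.mem_cons_of_mem _ hx)
              simpa using by omega
            rw [this, List.nil_append]

lemma inv_all {T : SimpleGraph (Fin m)} (hT : T.IsTree) (i : ℕ) : Inv T i := by
  induction i with
  | zero => exact inv_zero T
  | succ i ih => exact inv_succ hT i ih

end Aux3

end RandomGraphs

namespace RandomGraphs

set_option linter.unusedSectionVars false
set_option maxHeartbeats 1000000

section Aux4

open SimpleGraph

variable {m : ℕ} [NeZero m]

lemma countA {α : Type*} (f : α → ℕ) :
    ∀ (l : List α) (idx : ℕ) (h : idx < l.length),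
      List.Pairwise (fun a b => f b ≤ f a) l →
      l.length - idx ≤ (l.filter (fun w => f w ≤ f (l[idx]))).length := by
  intro l
  induction l with
  | nil => intro idx h; simp at h
  | cons a t ih =>
      intro idx h hpw
      obtain ⟨hhead, htail⟩ := List.pairwise_cons.mp hpw
      cases idx with
      | zero =>
          have : (a :: t).filter (fun w => f w ≤ f ((a :: t)[0])) = a :: t := by
            rw [List.filter_eq_self]
            intro x hx
            simp only [List.getElem_cons_zero, decide_eq_true_eq]
            rcases List.mem_cons.mp hx with rfl | hx
            · exact le_refl _
            · exact hhead x hx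
          rw [this]
          omega
      | succ e =>
          simp only [List.length_cons] at h ⊢
          have he : e < t.length := by omega
          have ihe := ih e he htail
          simp only [List.getElem_cons_succ, List.filter_cons]
          by_cases hc : f a ≤ f t[e]
          · rw [if_pos (by simpa using hc)]
            simp only [List.length_cons]
            omega
          · rw [if_neg (by simpa using hc)]
            omega

lemma countB {α : Type*} (f : α → ℕ) :
    ∀ (l : List α) (idx : ℕ) (h : idx < l.length),
      List.Pairwise (fun a b => f b ≤ f a) l →
      (l.filter (fun w => f w < f (l[idx]))).length ≤ l.length - idx - 1 := by
  intro l
  induction l with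
  | nil => intro idx h; simp at h
  | cons a t ih =>
      intro idx h hpw
      obtain ⟨hhead, htail⟩ := List.pairwise_cons.mp hpw
      cases idx with
      | zero =>
          simp only [List.getElem_cons_zero, List.filter_cons, List.length_cons]
          rw [if_neg (by simp)]
          have := List.length_filter_le (fun w => decide (f w < f a)) t
          omega
      | succ e =>
          simp only [List.length_cons] at h ⊢
          have he : e < t.length := by omega
          have ihe := ih e he htail
          simp only [List.getElem_cons_succ, List.filter_cons]
          have hge : f t[e] ≤ f a := hhead _ (List.getElem_mem he)
          rw [if_neg (by simp; omega)]
          omega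

lemma normXH_ge (T : SimpleGraph (Fin m)) {t : ℕ} (ht : t < m) :
    |(dfw T t : ℝ) - (hproc T t : ℝ) / 2| ≤ normXH T := by
  have := le_ciSup (f := fun i : Fin m => |(dfw T (i : ℕ) : ℝ) - (hproc T (i : ℕ) : ℝ) / 2|)
    (Set.Finite.bddAbove (Set.finite_range _)) ⟨t, ht⟩
  simpa [normXH] using this

lemma normXH_nonneg (T : SimpleGraph (Fin m)) : 0 ≤ normXH T :=
  le_trans (abs_nonneg _) (normXH_ge T (Nat.pos_of_ne_zero (NeZero.ne m)))

/-- The key structural lemma. -/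
lemma key {T : SimpleGraph (Fin m)} (hT : T.IsTree) {i j : ℕ} {u : Fin m}
    (hhead : (stackAt T i).head? = some u) (hj : 0 < j)
    (hjX : j ≤ dfw T i) (hjH : 2 * j ≤ hproc T i) :
    ∃ wX wH : Fin m,
      ((stackAt T i).reverse)[j - 1]? = some wX ∧
      T.dist 0 wH = 2 * j - 1 ∧
      (∀ P : T.Walk 0 u, P.IsPath → wH ∈ P.support) ∧
      u ≠ wX ∧ u ≠ wH ∧
      ((T.dist wX wH : ℝ) ≤ 2 * normXH T + 1) ∧
      (∀ v', T.dist 0 v' = 2 * j - 1 →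
        (∀ P : T.Walk 0 u, P.IsPath → v' ∈ P.support) → v' = wH) := by
  classical
  -- unpack the stack
  rcases hs : stackAt T i with _ | ⟨a, rest⟩
  · rw [hs] at hhead; simp at hhead
  rw [hs] at hhead
  simp only [List.head?_cons, Option.some.injEq] at hhead
  subst hhead
  have hstate : dfsState T i = (a :: rest, (dfsState T i).2) := by
    rw [← hs]; rfl
  obtain ⟨hnodup, hdisj, hcard, hclos, pa, hpa0, hpah, hpaadj, hpadist, hpaA, hR1, hpw, hcnt⟩ :=
    inv_all hT i _ _ _ hstate
  set h : ℕ := T.dist 0 a with hh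
  have hdfw : dfw T i = rest.length := by
    rw [dfw, hs]; simp
  have hhp : hproc T i = h := hproc_eq T (by rw [hs]; rfl)
  rw [hdfw] at hjX
  rw [hhp] at hjH
  set L : ℕ := rest.length with hL
  set idx : ℕ := L - j with hidx
  have hidxL : idx < L := by omega
  set wX : Fin m := rest[idx] with hwX
  have hwXmem : wX ∈ rest := List.getElem_mem hidxL
  obtain ⟨hd1, hd2, hadjX⟩ := hR1 wX hwXmem
  set d : ℕ := T.dist 0 wX with hd
  -- the getElem? fact
  have hget : ((a :: rest).reverse)[j - 1]? = some wX := by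
    have h1 : j - 1 < rest.reverse.length := by rw [List.length_reverse]; omega
    rw [List.reverse_cons, List.getElem?_append_left h1,
      List.getElem?_reverse (by omega : j - 1 < rest.length)]
    have he : rest.length - 1 - (j - 1) = idx := by omega
    rw [he, List.getElem?_eq_getElem hidxL]
  -- counting inequalities
  have hcntA : j ≤ cnt T rest d := by
    have := countA (T.dist 0) rest idx hidxL hpw
    rw [cnt]
    rw [← hwX, ← hd] at this
    omega
  have hcntB : cnt T rest (d - 1) ≤ j - 1 := by
    have hB := countB (T.dist 0) rest idx hidxL hpw
    rw [← hwX, ← hd] at hB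
    have heq : rest.filter (fun w => T.dist 0 w ≤ d - 1) =
        rest.filter (fun w => T.dist 0 w < d) := by
      apply List.filter_congr
      intro x hx
      simp only [decide_eq_decide]
      omega
    rw [cnt, heq]
    omega
  -- i < m
  have him : i < m := by
    have h1 : (dfsState T i).2.card = i := hcard
    have h2 : a ∉ (dfsState T i).2 := hdisj a (by simp)
    have h3 : (dfsState T i).2 ⊆ Finset.univ.erase a := by
      intro x hx
      rw [Finset.mem_erase]
      exact ⟨fun hxa => h2 (hxa ▸ hx), Finset.mem_univ x⟩
    have h4 := Finset.card_le_card h3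
    rw [h1, Finset.card_erase_of_mem (Finset.mem_univ a), Finset.card_univ,
      Fintype.card_fin] at h4
    omega
  set N : ℝ := normXH T with hN
  -- the two inequalities via the recorded times
  have hr1 : (j : ℝ) ≤ (d : ℝ) / 2 + N := by
    obtain ⟨t, ht, hthead, htlen⟩ := hcnt d hd2
    have htm : t < m := by omega
    have hdfwt : dfw T t = cnt T rest d := by rw [dfw, htlen]; omega
    have hhpt : hproc T t = d := by
      rw [hproc_eq T hthead, hpadist d hd2]
    have := normXH_ge T htm
    rw [hdfwt, hhpt] at this
    rw [abs_le] at this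
    have hc : (j : ℝ) ≤ (cnt T rest d : ℝ) := by exact_mod_cast hcntA
    linarith [this.1, this.2]
  have hr2 : ((d : ℝ) - 1) / 2 - N ≤ (j : ℝ) - 1 := by
    obtain ⟨t, ht, hthead, htlen⟩ := hcnt (d - 1) (by omega)
    have htm : t < m := by omega
    have hdfwt : dfw T t = cnt T rest (d - 1) := by rw [dfw, htlen]; omega
    have hhpt : hproc T t = d - 1 := by
      rw [hproc_eq T hthead, hpadist (d - 1) (by omega)]
    have := normXH_ge T htm
    rw [hdfwt, hhpt] at this
    rw [abs_le] at this
    have hc : (cnt T rest (d - 1) : ℝ) ≤ (j : ℝ) - 1 := by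
      have : ((j : ℝ) - 1) = ((j - 1 : ℕ) : ℝ) := by
        push_cast [Nat.cast_sub (by omega : 1 ≤ j)]; ring
      rw [this]
      exact_mod_cast hcntB
    have hdc : ((d - 1 : ℕ) : ℝ) = (d : ℝ) - 1 := by
      push_cast [Nat.cast_sub (by omega : 1 ≤ d)]; ring
    rw [hdc] at this
    linarith [this.1, this.2]
  -- the path and wH
  have h2j : 2 * j - 1 ≤ h := by omega
  set wH : Fin m := pa (2 * j - 1) with hwH
  have hdistwH : T.dist 0 wH = 2 * j - 1 := hpadist _ h2j
  have hWpath : ((mkW T pa h hpaadj).copy hpa0 hpah).IsPath := by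
    rw [SimpleGraph.Walk.isPath_copy]
    exact mkW_isPath T pa h hpaadj hpadist
  obtain ⟨P₀, -, huniq⟩ := hT.existsUnique_path (0 : Fin m) a
  have hallP : ∀ P : T.Walk 0 a, P.IsPath → wH ∈ P.support := by
    intro P hP
    rw [(huniq P hP).trans (huniq _ hWpath).symm]
    rw [SimpleGraph.Walk.support_copy, mkW_mem_support]
    exact ⟨2 * j - 1, h2j, rfl⟩
  have huniqv : ∀ v', T.dist 0 v' = 2 * j - 1 →
      (∀ P : T.Walk 0 a, P.IsPath → v' ∈ P.support) → v' = wH := by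
    intro v' hv1 hv2
    have := hv2 _ hWpath
    rw [SimpleGraph.Walk.support_copy, mkW_mem_support] at this
    obtain ⟨e, he, rfl⟩ := this
    rw [hpadist e he] at hv1
    rw [hv1]
  -- distance bound
  have hdistb : (T.dist wX wH : ℝ) ≤ 2 * N + 1 := by
    have htri : T.dist wX wH ≤ T.dist wX (pa (d - 1)) + T.dist (pa (d - 1)) wH :=
      hT.isConnected.dist_triangle
    have h1 : T.dist wX (pa (d - 1)) = 1 := by
      rw [SimpleGraph.dist_comm]
      exact SimpleGraph.dist_eq_one_iff_adj.mpr hadjX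
    have hD2 : (T.dist (pa (d - 1)) wH : ℝ) ≤ 2 * N := by
      by_cases hcase : d - 1 ≤ 2 * j - 1
      · have := pa_dist_le hT.isConnected pa h hpaadj (d - 1) (2 * j - 1) hcase h2j
        have hcast : ((2 * j - 1 - (d - 1) : ℕ) : ℝ) = 2 * (j : ℝ) - (d : ℝ) := by
          push_cast [Nat.cast_sub (by omega : d - 1 ≤ 2 * j - 1),
            Nat.cast_sub (by omega : 1 ≤ 2 * j), Nat.cast_sub (by omega : 1 ≤ d)]
          ring
        have : (T.dist (pa (d - 1)) wH : ℝ) ≤ ((2 * j - 1 - (d - 1) : ℕ) : ℝ) := by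
          exact_mod_cast this
        rw [hcast] at this
        linarith
      · push_neg at hcase
        have hle := pa_dist_le hT.isConnected pa h hpaadj (2 * j - 1) (d - 1)
          (by omega) (by omega)
        rw [SimpleGraph.dist_comm]
        have hcast : ((d - 1 - (2 * j - 1) : ℕ) : ℝ) = (d : ℝ) - 2 * (j : ℝ) := by
          push_cast [Nat.cast_sub (by omega : 2 * j - 1 ≤ d - 1),
            Nat.cast_sub (by omega : 1 ≤ 2 * j), Nat.cast_sub (by omega : 1 ≤ d)]
          ring
        have : (T.dist (pa (2 * j - 1)) (pa (d - 1)) : ℝ) ≤ ((d - 1 - (2 * j - 1) : ℕ) : ℝ) := by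
          exact_mod_cast hle
        rw [hcast] at this
        linarith
    have : (T.dist wX wH : ℝ) ≤ (T.dist wX (pa (d - 1)) : ℝ) + (T.dist (pa (d - 1)) wH : ℝ) := by
      exact_mod_cast htri
    rw [h1] at this
    push_cast at this
    linarith
  refine ⟨wX, wH, hget, hdistwH, hallP, ?_, ?_, hdistb, huniqv⟩
  · intro hEq
    exact (List.nodup_cons.mp hnodup).1 (hEq ▸ hwXmem)
  · intro hEq
    have := hdistwH
    rw [← hEq] at this
    rw [← hh] at this
    omega

end Aux4

end RandomGraphs

namespace RandomGraphs

set_option linter.unusedSectionVars false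
set_option maxHeartbeats 1000000

section Aux5

open SimpleGraph

variable {m : ℕ} [NeZero m]

lemma dist_le_of_le {G G' : SimpleGraph (Fin m)} (hle : G ≤ G') (hG : G.Connected)
    (a b : Fin m) : G'.dist a b ≤ G.dist a b := by
  obtain ⟨p, hp⟩ := hG.exists_walk_length_eq_dist a b
  calc G'.dist a b ≤ (p.mapLe hle).length := SimpleGraph.dist_le _
    _ = p.length := SimpleGraph.Walk.length_mapLe ..
    _ = G.dist a b := hp

/-- Replacing a `G^X` surplus edge by a short path in `G^H`. -/
lemma pe1 {T : SimpleGraph (Fin m)} {Q : Finset (ℕ × ℕ)} (hT : T.IsTree)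
    (hQ : capX T Q = capH T Q) (hGHc : (GH T Q).Connected)
    {q : ℕ × ℕ} (hqQ : q ∈ Q) (hj : 0 < q.2) (hjX : q.2 ≤ dfw T q.1)
    {u v : Fin m} (hhead : (stackAt T q.1).head? = some u)
    (hgetv : ((stackAt T q.1).reverse)[q.2 - 1]? = some v) :
    ((GH T Q).dist u v : ℝ) ≤ 2 * normXH T + 2 := by
  have hqX : q ∈ capX T Q := by
    rw [capX, Finset.mem_filter]; exact ⟨hqQ, hj, hjX⟩
  have hqH : q ∈ capH T Q := hQ ▸ hqX
  have hjH : 2 * q.2 ≤ hproc T q.1 := by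
    rw [capH, Finset.mem_filter] at hqH; exact hqH.2.2
  obtain ⟨wX, wH, hget, hdH, hallP, hneX, hneH, hdb, huniqv⟩ := key hT hhead hj hjX hjH
  have hvwX : v = wX := by
    rw [hgetv] at hget; exact Option.some.inj hget
  subst hvwX
  have hadjH : (GH T Q).Adj u wH := by
    rw [GH, SimpleGraph.sup_adj]
    refine Or.inr ?_
    rw [SimpleGraph.fromRel_adj]
    exact ⟨hneH, Or.inl ⟨q, hqQ, hj, hjH, hhead, 0, rootOf_eq, hdH, hallP⟩⟩
  have h1 : (GH T Q).dist u wH = 1 := SimpleGraph.dist_eq_one_iff_adj.mpr hadjH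
  have h2 : (GH T Q).dist wH v ≤ T.dist wH v :=
    dist_le_of_le le_sup_left hT.isConnected wH v
  have h3 : (GH T Q).dist u v ≤ (GH T Q).dist u wH + (GH T Q).dist wH v :=
    hGHc.dist_triangle
  have h4 : (T.dist wH v : ℝ) ≤ 2 * normXH T + 1 := by
    rw [SimpleGraph.dist_comm]; exact hdb
  have h2' : ((GH T Q).dist wH v : ℝ) ≤ (T.dist wH v : ℝ) := by exact_mod_cast h2
  have h3' : ((GH T Q).dist u v : ℝ) ≤ ((GH T Q).dist u wH : ℝ) + ((GH T Q).dist wH v : ℝ) := by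
    exact_mod_cast h3
  rw [h1] at h3'
  push_cast at h3'
  linarith

/-- Replacing a `G^H` surplus edge by a short path in `G^X`. -/
lemma pe2 {T : SimpleGraph (Fin m)} {Q : Finset (ℕ × ℕ)} (hT : T.IsTree)
    (hQ : capX T Q = capH T Q) (hGXc : (GX T Q).Connected)
    {q : ℕ × ℕ} (hqQ : q ∈ Q) (hj : 0 < q.2) (hjH : 2 * q.2 ≤ hproc T q.1)
    {u v : Fin m} (hhead : (stackAt T q.1).head? = some u)
    (hdv : T.dist 0 v = 2 * q.2 - 1)
    (hpaths : ∀ P : T.Walk 0 u, P.IsPath → v ∈ P.support) :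
    (((GX T Q).dist u v : ℝ) ≤ 2 * normXH T + 2) ∧
      (∀ v', T.dist 0 v' = 2 * q.2 - 1 →
        (∀ P : T.Walk 0 u, P.IsPath → v' ∈ P.support) → v' = v) := by
  have hqH : q ∈ capH T Q := by
    rw [capH, Finset.mem_filter]; exact ⟨hqQ, hj, hjH⟩
  have hqX : q ∈ capX T Q := hQ ▸ hqH
  have hjX : q.2 ≤ dfw T q.1 := by
    rw [capX, Finset.mem_filter] at hqX; exact hqX.2.2
  obtain ⟨wX, wH, hget, hdH, hallP, hneX, hneH, hdb, huniqv⟩ := key hT hhead hj hjX hjH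
  have hvwH : v = wH := huniqv v hdv hpaths
  subst hvwH
  have hadjX : (GX T Q).Adj u wX := by
    rw [GX, SimpleGraph.sup_adj]
    refine Or.inr ?_
    rw [SimpleGraph.fromRel_adj]
    exact ⟨hneX, Or.inl ⟨q, hqQ, hj, hjX, hhead, hget⟩⟩
  have h1 : (GX T Q).dist u wX = 1 := SimpleGraph.dist_eq_one_iff_adj.mpr hadjX
  have h2 : (GX T Q).dist wX v ≤ T.dist wX v :=
    dist_le_of_le le_sup_left hT.isConnected wX v
  have h3 : (GX T Q).dist u v ≤ (GX T Q).dist u wX + (GX T Q).dist wX v :=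
    hGXc.dist_triangle
  refine ⟨?_, fun v' h1' h2' => huniqv v' h1' h2'⟩
  have h2' : ((GX T Q).dist wX v : ℝ) ≤ (T.dist wX v : ℝ) := by exact_mod_cast h2
  have h3' : ((GX T Q).dist u v : ℝ) ≤ ((GX T Q).dist u wX : ℝ) + ((GX T Q).dist wX v : ℝ) := by
    exact_mod_cast h3
  rw [h1] at h3'
  push_cast at h3'
  linarith

lemma walk_bound {G₁ G₂ : SimpleGraph (Fin m)} (hc : G₂.Connected)
    (S : Finset (Sym2 (Fin m))) {c : ℝ} (hc1 : 1 ≤ c)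
    (hadj : ∀ u v : Fin m, G₁.Adj u v →
      G₂.Adj u v ∨ (s(u, v) ∈ S ∧ ((G₂.dist u v : ℝ) ≤ c))) :
    ∀ {a b : Fin m} (p : G₁.Walk a b),
      (G₂.dist a b : ℝ) ≤ p.length + (c - 1) * ((p.edges.filter (· ∈ S)).length) := by
  intro a b p
  induction p with
  | nil => simp
  | @cons u x w h q ih =>
      have tri : (G₂.dist u w : ℝ) ≤ (G₂.dist u x : ℝ) + (G₂.dist x w : ℝ) := by
        exact_mod_cast hc.dist_triangle
      simp only [SimpleGraph.Walk.edges_cons, List.filter_cons, SimpleGraph.Walk.length_cons]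
      have hfl := List.length_filter_le (fun e => decide (e ∈ S)) q.edges
      rcases hadj _ _ h with hgood | ⟨hmem, hbad⟩
      · have h1 : (G₂.dist u x : ℝ) ≤ 1 := by
          exact_mod_cast le_of_eq (SimpleGraph.dist_eq_one_iff_adj.mpr hgood)
        by_cases hin : s(u, x) ∈ S
        · rw [if_pos (by simpa using hin)]
          simp only [List.length_cons]
          push_cast
          nlinarith [ih]
        · rw [if_neg (by simpa using hin)]
          push_cast
          nlinarith [ih]
      · rw [if_pos (by simpa using hmem)]
        simp only [List.length_cons]
        push_cast
        nlinarith [ih]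

lemma dist_dist {G₁ G₂ : SimpleGraph (Fin m)} (h1 : G₁.Connected) (hc : G₂.Connected)
    (S : Finset (Sym2 (Fin m))) {c : ℝ} (hc1 : 1 ≤ c)
    (hadj : ∀ u v : Fin m, G₁.Adj u v →
      G₂.Adj u v ∨ (s(u, v) ∈ S ∧ ((G₂.dist u v : ℝ) ≤ c)))
    (k : ℕ) (hSk : S.card ≤ k) :
    ∀ a b : Fin m, (G₂.dist a b : ℝ) ≤ (G₁.dist a b : ℝ) + (c - 1) * k := by
  intro a b
  obtain ⟨p, hp⟩ := h1.exists_walk_length_eq_dist a b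
  have hb := walk_bound hc S hc1 hadj p.bypass
  have hlen : (p.bypass.length : ℝ) ≤ (G₁.dist a b : ℝ) := by
    exact_mod_cast hp ▸ p.length_bypass_le
  have hnd : (p.bypass.edges.filter (· ∈ S)).Nodup :=
    (p.bypass_isPath.isTrail.edges_nodup).filter _
  have hsub : (p.bypass.edges.filter (· ∈ S)).toFinset ⊆ S := by
    intro e he
    rw [List.mem_toFinset, List.mem_filter] at he
    simpa using he.2
  have hcard : ((p.bypass.edges.filter (· ∈ S)).length : ℝ) ≤ (k : ℝ) := by
    have := Finset.card_le_card hsub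
    rw [List.toFinset_card_of_nodup hnd] at this
    exact_mod_cast le_trans this hSk
  have hcm : 0 ≤ c - 1 := by linarith
  nlinarith [hb, mul_le_mul_of_nonneg_left hcard hcm]

end Aux5

end RandomGraphs
open RandomGraphs in
/-- Let `T` be a tree on `[m]` with depth-first walk `X` and
height process `H`, and let `Q` be a finite pointset with
`Q ∩ X = Q ∩ (H/2)`, of cardinality `k`.  Then the Gromov–Hausdorff distance
between the graphs `G^X(T,Q)` and `G^H(T,Q)` (equipped with their graph
distances) is at most `k (‖X - H/2‖ + 2)`. -/
theorem ghDist_GX_GH_le (m : ℕ) [NeZero m]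
    (T : SimpleGraph (Fin m)) (hT : T.IsTree) (Q : Finset (ℕ × ℕ))
    (hQ : capX T Q = capH T Q) (k : ℕ) (hk : k = (capX T Q).card) :
    dist (ghSpaceOfGraph (GX T Q) (hT.isConnected.mono le_sup_left))
        (ghSpaceOfGraph (GH T Q) (hT.isConnected.mono le_sup_left))
      ≤ (k : ℝ) * (normXH T + 2) := by
  classical
  have hGXc : (GX T Q).Connected := hT.isConnected.mono le_sup_left
  have hGHc : (GH T Q).Connected := hT.isConnected.mono le_sup_left
  set N : ℝ := normXH T with hN
  have hNn : (0 : ℝ) ≤ N := normXH_nonneg T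
  set c : ℝ := 2 * N + 2 with hc
  have hc1 : (1 : ℝ) ≤ c := by rw [hc]; linarith
  -- the bad edge sets
  set eX : ℕ × ℕ → Sym2 (Fin m) := fun q =>
    s(((stackAt T q.1).head?).getD 0, (((stackAt T q.1).reverse)[q.2 - 1]?).getD 0) with heX
  set SX : Finset (Sym2 (Fin m)) := (capX T Q).image eX with hSX
  have hSXk : SX.card ≤ k := by rw [hk, hSX]; exact Finset.card_image_le
  set eH : ℕ × ℕ → Sym2 (Fin m) := fun q =>
    s(((stackAt T q.1).head?).getD 0,
      Classical.epsilon (fun v : Fin m => T.dist 0 v = 2 * q.2 - 1 ∧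
        ∀ P : T.Walk 0 (((stackAt T q.1).head?).getD 0), P.IsPath → v ∈ P.support)) with heH
  set SH : Finset (Sym2 (Fin m)) := (capH T Q).image eH with hSH
  have hSHk : SH.card ≤ k := by rw [hk, hQ, hSH]; exact Finset.card_image_le
  -- adjacency transfer, direction GX → GH
  have hadjXH : ∀ u v : Fin m, (GX T Q).Adj u v →
      (GH T Q).Adj u v ∨ (s(u, v) ∈ SX ∧ (((GH T Q).dist u v : ℝ) ≤ c)) := by
    intro u v hadj
    rw [GX, SimpleGraph.sup_adj] at hadj
    rcases hadj with htadj | hradj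
    · exact Or.inl (by rw [GH, SimpleGraph.sup_adj]; exact Or.inl htadj)
    · rw [SimpleGraph.fromRel_adj] at hradj
      obtain ⟨hne, hrel⟩ := hradj
      rcases hrel with ⟨q, hqQ, hj, hjX, hhead, hget⟩ | ⟨q, hqQ, hj, hjX, hhead, hget⟩
      · refine Or.inr ⟨?_, pe1 hT hQ hGHc hqQ hj hjX hhead hget⟩
        rw [hSX]
        refine Finset.mem_image.mpr ⟨q, ?_, ?_⟩
        · rw [capX, Finset.mem_filter]; exact ⟨hqQ, hj, hjX⟩
        · rw [heX]; beta_reduce; rw [hhead, hget]; rfl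
      · refine Or.inr ⟨?_, ?_⟩
        · rw [hSX]
          refine Finset.mem_image.mpr ⟨q, ?_, ?_⟩
          · rw [capX, Finset.mem_filter]; exact ⟨hqQ, hj, hjX⟩
          · rw [heX]; beta_reduce; rw [hhead, hget]; exact Sym2.eq_swap.symm
        · have := pe1 hT hQ hGHc hqQ hj hjX hhead hget
          rwa [SimpleGraph.dist_comm (u := u)]
  -- adjacency transfer, direction GH → GX
  have hadjHX : ∀ u v : Fin m, (GH T Q).Adj u v →
      (GX T Q).Adj u v ∨ (s(u, v) ∈ SH ∧ (((GX T Q).dist u v : ℝ) ≤ c)) := by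
    intro u v hadj
    rw [GH, SimpleGraph.sup_adj] at hadj
    rcases hadj with htadj | hradj
    · exact Or.inl (by rw [GX, SimpleGraph.sup_adj]; exact Or.inl htadj)
    · rw [SimpleGraph.fromRel_adj] at hradj
      obtain ⟨hne, hrel⟩ := hradj
      have main : ∀ u' v' : Fin m,
          (∃ q ∈ Q, 0 < q.2 ∧ 2 * q.2 ≤ hproc T q.1 ∧
            (stackAt T q.1).head? = some u' ∧
            ∃ r, (rootOf : Option (Fin m)) = some r ∧
              T.dist r v' = 2 * q.2 - 1 ∧
              ∀ P : T.Walk r u', P.IsPath → v' ∈ P.support) →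
          s(u', v') ∈ SH ∧ (((GX T Q).dist u' v' : ℝ) ≤ c) := by
        intro u' v' ⟨q, hqQ, hj, hjH, hhead, r, hr, hdv, hpaths⟩
        have hr0 : r = 0 := by
          rw [rootOf_eq] at hr; exact (Option.some.inj hr).symm
        subst hr0
        obtain ⟨hdb, huniq⟩ := pe2 hT hQ hGXc hqQ hj hjH hhead hdv hpaths
        refine ⟨?_, hdb⟩
        rw [hSH]
        refine Finset.mem_image.mpr ⟨q, ?_, ?_⟩
        · rw [capH, Finset.mem_filter]; exact ⟨hqQ, hj, hjH⟩
        · rw [heH]; beta_reduce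
          rw [hhead]
          have hD : (((some u' : Option (Fin m))).getD 0) = u' := rfl
          rw [hD]
          have hex : ∃ v₀ : Fin m, T.dist 0 v₀ = 2 * q.2 - 1 ∧
              ∀ P : T.Walk 0 u', P.IsPath → v₀ ∈ P.support := ⟨v', hdv, hpaths⟩
          have hspec := Classical.epsilon_spec hex
          have := huniq _ hspec.1 hspec.2
          rw [this]
      rcases hrel with h1 | h1
      · exact Or.inr (main u v h1)
      · have := main v u h1
        refine Or.inr ⟨by rw [Sym2.eq_swap]; exact this.1, ?_⟩
        rw [SimpleGraph.dist_comm (u := u)]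
        exact this.2
  have dist1 : ∀ a b : Fin m,
      (((GH T Q).dist a b : ℝ)) ≤ ((GX T Q).dist a b : ℝ) + (c - 1) * k :=
    dist_dist hGXc hGHc SX hc1 hadjXH k hSXk
  have dist2 : ∀ a b : Fin m,
      (((GX T Q).dist a b : ℝ)) ≤ ((GH T Q).dist a b : ℝ) + (c - 1) * k :=
    dist_dist hGHc hGXc SH hc1 hadjHX k hSHk
  have main : ∀ x y : Fin m,
      |((GX T Q).dist x y : ℝ) - ((GH T Q).dist x y : ℝ)| ≤ (c - 1) * k := by
    intro x y
    rw [abs_le]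
    constructor
    · linarith [dist1 x y]
    · linarith [dist2 x y]
  -- pass to Gromov–Hausdorff space
  letI iX : MetricSpace (Fin m) := graphMetric (GX T Q) hGXc
  letI iH : MetricSpace (Fin m) := graphMetric (GH T Q) hGHc
  haveI nFin : Nonempty (Fin m) := ⟨0⟩
  haveI cX : @CompactSpace (Fin m) iX.toUniformSpace.toTopologicalSpace :=
    @Finite.compactSpace (Fin m) iX.toUniformSpace.toTopologicalSpace (Finite.of_fintype _)
  haveI cH : @CompactSpace (Fin m) iH.toUniformSpace.toTopologicalSpace :=
    @Finite.compactSpace (Fin m) iH.toUniformSpace.toTopologicalSpace (Finite.of_fintype _)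
  have hgh := @GromovHausdorff.ghDist_le_of_approx_subsets (Fin m) iX cX nFin (Fin m) iH cH nFin
    Set.univ (fun x => (x.1 : Fin m)) 0 ((c - 1) * k) 0
    (fun x => ⟨x, Set.mem_univ x,
      le_of_eq (@dist_self (Fin m) iX.toPseudoMetricSpace x)⟩)
    (fun y => ⟨⟨y, Set.mem_univ y⟩,
      le_of_eq (@dist_self (Fin m) iH.toPseudoMetricSpace y)⟩)
    (fun x y => main x.1 y.1)
  have hEq : dist (ghSpaceOfGraph (GX T Q) (hT.isConnected.mono le_sup_left))
      (ghSpaceOfGraph (GH T Q) (hT.isConnected.mono le_sup_left))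
      = @GromovHausdorff.ghDist (Fin m) (Fin m) iX nFin cX iH nFin cH := rfl
  rw [hEq]
  refine le_trans hgh ?_
  have hk0 : (0 : ℝ) ≤ (k : ℝ) := Nat.cast_nonneg k
  rw [hc]
  nlinarith
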